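/- For any probability measure μ and any nonnegative measurable function f with ∫ f² dμ = 1, we have ∫_{f ≥ 2} f² log f² dμ ≤ (log 4 / (log 4 - 1)) · Ent_μ(f²), where Ent_μ(f²) = ∫ f² log f² dμ (since ∫ f² dμ = 1). -/

import Mathlib

open MeasureTheory Real

theorem stmt_2 {Ω : Type*} [MeasurableSpace Ω] (μ : Measure Ω) [IsProbabilityMeasure μ]
    (f : Ω → ℝ) (hf : Measurable f) (hpos : ∀ x, 0 ≤ f x)
    (hint2 : Integrable (fun x => f x ^ 2) μ)
    (hint3 : Integrable (fun x => f x ^ 2 * Real.log (f x ^ 2)) μ)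
    (hnorm : ∫ x, f x ^ 2 ∂μ = 1) :
    ∫ x in {x | 2 ≤ f x}, f x ^ 2 * Real.log (f x ^ 2) ∂μ ≤
      (Real.log 4 / (Real.log 4 - 1)) * ∫ x, f x ^ 2 * Real.log (f x ^ 2) ∂μ := by
  set A : Set Ω := {x | 2 ≤ f x} with hAdef
  have hAmeas : MeasurableSet A := measurableSet_le measurable_const hf
  have hlog4 : 1 < Real.log 4 := by
    rw [Real.lt_log_iff_exp_lt (by norm_num)]
    have := Real.exp_one_lt_d9
    linarith
  have key : ∀ x, f x ^ 2 - 1 ≤ f x ^ 2 * Real.log (f x ^ 2) := by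
    intro x
    rcases eq_or_lt_of_le (hpos x) with h | h
    · simp [← h]
    · have ht : 0 < f x ^ 2 := by positivity
      have h1 : Real.log (f x ^ 2)⁻¹ ≤ (f x ^ 2)⁻¹ - 1 :=
        Real.log_le_sub_one_of_pos (by positivity)
      rw [Real.log_inv] at h1
      have h2 : 1 - (f x ^ 2)⁻¹ ≤ Real.log (f x ^ 2) := by linarith
      calc f x ^ 2 - 1 = f x ^ 2 * (1 - (f x ^ 2)⁻¹) := by field_simp
        _ ≤ f x ^ 2 * Real.log (f x ^ 2) := mul_le_mul_of_nonneg_left h2 ht.le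
  have hE : ∫ x, f x ^ 2 * Real.log (f x ^ 2) ∂μ
      = (∫ x in A, f x ^ 2 * Real.log (f x ^ 2) ∂μ)
        + ∫ x in Aᶜ, f x ^ 2 * Real.log (f x ^ 2) ∂μ :=
    (integral_add_compl hAmeas hint3).symm
  have hS : (1 : ℝ) = (∫ x in A, f x ^ 2 ∂μ) + ∫ x in Aᶜ, f x ^ 2 ∂μ := by
    rw [← hnorm]; exact (integral_add_compl hAmeas hint2).symm
  have h1 : ∫ x in Aᶜ, (f x ^ 2 - 1) ∂μ ≤ ∫ x in Aᶜ, f x ^ 2 * Real.log (f x ^ 2) ∂μ :=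
    setIntegral_mono_on ((hint2.sub (integrable_const 1)).integrableOn)
      hint3.integrableOn hAmeas.compl (fun x _ => key x)
  have h2 : ∫ x in Aᶜ, (f x ^ 2 - 1) ∂μ
      = (∫ x in Aᶜ, f x ^ 2 ∂μ) - (μ Aᶜ).toReal := by
    rw [integral_sub hint2.integrableOn (integrable_const 1), setIntegral_const]
    simp [smul_eq_mul, measureReal_def]
  have hmc : (μ Aᶜ).toReal ≤ 1 := by
    calc (μ Aᶜ).toReal ≤ (1 : ENNReal).toReal :=
          ENNReal.toReal_mono ENNReal.one_ne_top prob_le_one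
      _ = 1 := by simp
  have h3 : Real.log 4 * ∫ x in A, f x ^ 2 ∂μ
      ≤ ∫ x in A, f x ^ 2 * Real.log (f x ^ 2) ∂μ := by
    have : ∫ x in A, Real.log 4 * f x ^ 2 ∂μ
        ≤ ∫ x in A, f x ^ 2 * Real.log (f x ^ 2) ∂μ := by
      refine setIntegral_mono_on (hint2.integrableOn.const_mul _)
        hint3.integrableOn hAmeas ?_
      intro x hx
      have hx' : (2 : ℝ) ≤ f x := hx
      have hx2 : (4 : ℝ) ≤ f x ^ 2 := by nlinarith
      have hlog : Real.log 4 ≤ Real.log (f x ^ 2) := Real.log_le_log (by norm_num) hx2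
      nlinarith [mul_nonneg (by positivity : (0:ℝ) ≤ f x ^ 2) (sub_nonneg.2 hlog)]
    rwa [integral_const_mul] at this
  have hSnn : 0 ≤ ∫ x in A, f x ^ 2 ∂μ :=
    setIntegral_nonneg hAmeas (fun x _ => by positivity)
  rw [div_mul_eq_mul_div, le_div_iff₀ (by linarith)]
  nlinarith [h1, h2, h3, hmc, hS, hE, hSnn]
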